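/- Let n ≥ 2, let a₀,…,aₙ be nonzero complex numbers, bⱼ ∈ ℂ with bⱼ² = aⱼ, and let X be the spherical-coordinate parametrization of the quadric. Then (u¹,…,uⁿ) is a conjugate system with the stated relation: for all 1 ≤ k < j ≤ n and all u ∈ ℂⁿ with cos(uʲ) ≠ 0, ∂ₖ∂ⱼX(u) = −tan(uʲ)·∂ₖX(u), where ∂ⱼ denotes the directional derivative along the j-th standard basis vector of ℂⁿ. -/

import Mathlib

noncomputable section

open Complex Finset

/-- `Cprod n k u = ∏_{j=k+1}^{n} cos(uʲ)` (zero-based: product of `cos (u j)` over `j ≥ k`). -/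
def Cprod (n k : ℕ) (u : Fin n → ℂ) : ℂ :=
  ∏ j ∈ Finset.univ.filter (fun j : Fin n => k ≤ (j : ℕ)), Complex.cos (u j)

/-- Spherical-coordinate parametrization of the quadric `∑ xⱼ²/aⱼ = 1` (with `bⱼ² = aⱼ`). -/
def sphX (n : ℕ) (b : Fin (n+1) → ℂ) (u : Fin n → ℂ) : Fin (n+1) → ℂ :=
  Fin.cons (b 0 * Cprod n 0 u)
    (fun k : Fin n => b k.succ * Cprod n (k.val + 1) u * Complex.sin (u k))

/-- Directional (partial) derivative along the j-th standard basis vector of ℂⁿ. -/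
def pd {n m : ℕ} (j : Fin n) (F : (Fin n → ℂ) → (Fin m → ℂ)) :
    (Fin n → ℂ) → (Fin m → ℂ) :=
  fun u => fderiv ℂ F u (Pi.single j 1)

/-! ### Auxiliary machinery -/

/-- The index set of `Cprod n k`. -/
def Sset (n k : ℕ) : Finset (Fin n) := Finset.univ.filter (fun l : Fin n => k ≤ (l : ℕ))

lemma Cprod_eq (n k : ℕ) (u : Fin n → ℂ) :
    Cprod n k u = ∏ l ∈ Sset n k, Complex.cos (u l) := rfl

lemma mem_Sset {n k : ℕ} {j : Fin n} : j ∈ Sset n k ↔ k ≤ (j : ℕ) := by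
  simp [Sset]

lemma prod_cos_update_of_not_mem {n : ℕ} {s : Finset (Fin n)} {j : Fin n} (hj : j ∉ s)
    (u : Fin n → ℂ) (t : ℂ) :
    ∏ l ∈ s, Complex.cos (Function.update u j t l) = ∏ l ∈ s, Complex.cos (u l) :=
  Finset.prod_congr rfl fun l hl => by
    rw [Function.update_of_ne (ne_of_mem_of_not_mem hl hj)]

lemma prod_factor {n : ℕ} {s : Finset (Fin n)} {j : Fin n} (hj : j ∈ s) (u : Fin n → ℂ) :
    ∏ l ∈ s, Complex.cos (u l) = Complex.cos (u j) * ∏ l ∈ s.erase j, Complex.cos (u l) :=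
  (Finset.mul_prod_erase s _ hj).symm

lemma prod_update_factor {n : ℕ} {s : Finset (Fin n)} {j : Fin n} (hj : j ∈ s)
    (u : Fin n → ℂ) (t : ℂ) :
    ∏ l ∈ s, Complex.cos (Function.update u j t l)
      = Complex.cos t * ∏ l ∈ s.erase j, Complex.cos (u l) := by
  rw [prod_factor hj, Function.update_self,
    prod_cos_update_of_not_mem (Finset.notMem_erase j s)]

lemma diff_prod_cos {n : ℕ} (s : Finset (Fin n)) :
    Differentiable ℂ (fun u : Fin n → ℂ => ∏ l ∈ s, Complex.cos (u l)) := by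
  classical
  induction s using Finset.cons_induction with
  | empty => simpa using differentiable_const (1 : ℂ)
  | cons a s ha ih =>
      simp only [Finset.prod_cons]
      exact (Complex.differentiable_cos.comp (differentiable_apply a)).mul ih

lemma myUpdate_hasDerivAt {n : ℕ} (u : Fin n → ℂ) (j : Fin n) (t : ℂ) :
    HasDerivAt (fun s : ℂ => Function.update u j s) (Pi.single j 1 : Fin n → ℂ) t := by
  have he : (fun s : ℂ => Function.update u j s)
      = fun s => u + (s - u j) • (Pi.single j 1 : Fin n → ℂ) := by
    funext s l
    by_cases h : l = j
    · subst h; simp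
    · simp [Function.update_of_ne h, Pi.single_eq_of_ne h]
  rw [he]
  simpa using (((hasDerivAt_id t).sub_const (u j)).smul_const
    (Pi.single j (1 : ℂ) : Fin n → ℂ)).const_add u

lemma pd_eq {n m : ℕ} {F : (Fin n → ℂ) → (Fin m → ℂ)} {j : Fin n} {u : Fin n → ℂ}
    {g : Fin m → ℂ} (hF : DifferentiableAt ℂ F u)
    (h : HasDerivAt (fun t => F (Function.update u j t)) g (u j)) : pd j F u = g := by
  have h1 := myUpdate_hasDerivAt u j (u j)
  have h2 : HasDerivAt (F ∘ fun s : ℂ => Function.update u j s)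
      (fderiv ℂ F u (Pi.single j 1)) (u j) :=
    HasFDerivAt.comp_hasDerivAt (u j)
      (by rw [Function.update_eq_self]; exact hF.hasFDerivAt) h1
  exact h2.unique h

/-- Closed form of `pd j (sphX n b)`. -/
def Gd (n : ℕ) (b : Fin (n+1) → ℂ) (j : Fin n) (u : Fin n → ℂ) : Fin (n+1) → ℂ :=
  Fin.cons (-(b 0 * Complex.sin (u j) * ∏ l ∈ (Sset n 0).erase j, Complex.cos (u l)))
    (fun m : Fin n =>
      if m.val < j.val then
        -(b m.succ * Complex.sin (u j)
          * (∏ l ∈ (Sset n (m.val+1)).erase j, Complex.cos (u l)) * Complex.sin (u m))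
      else if m = j then
        b m.succ * Cprod n (m.val+1) u * Complex.cos (u m)
      else 0)

lemma diff_sphX {n : ℕ} (b : Fin (n+1) → ℂ) : Differentiable ℂ (sphX n b) := by
  apply differentiable_pi.mpr
  intro i
  induction i using Fin.cases with
  | zero =>
      simp only [sphX, Fin.cons_zero, Cprod_eq]
      exact (diff_prod_cos _).const_mul _
  | succ m =>
      simp only [sphX, Fin.cons_succ, Cprod_eq]
      exact ((diff_prod_cos _).const_mul _).mul
        (Complex.differentiable_sin.comp (differentiable_apply m))

lemma diff_Gd {n : ℕ} (b : Fin (n+1) → ℂ) (j : Fin n) :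
    Differentiable ℂ (fun u => Gd n b j u) := by
  apply differentiable_pi.mpr
  intro i
  induction i using Fin.cases with
  | zero =>
      simp only [Gd, Fin.cons_zero]
      exact (((Complex.differentiable_sin.comp (differentiable_apply j)).const_mul
        (b 0)).mul (diff_prod_cos _)).neg
  | succ m =>
      simp only [Gd, Fin.cons_succ]
      by_cases h1 : m.val < j.val
      · simp only [if_pos h1]
        exact ((((Complex.differentiable_sin.comp (differentiable_apply j)).const_mul
          (b m.succ)).mul (diff_prod_cos _)).mul
          (Complex.differentiable_sin.comp (differentiable_apply m))).neg
      · simp only [if_neg h1]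
        by_cases h2 : m = j
        · simp only [if_pos h2, Cprod_eq]
          exact ((diff_prod_cos _).const_mul _).mul
            (Complex.differentiable_cos.comp (differentiable_apply m))
        · simp only [if_neg h2]
          exact differentiable_const 0

lemma pd_sphX {n : ℕ} (b : Fin (n+1) → ℂ) (j : Fin n) (u : Fin n → ℂ) :
    pd j (sphX n b) u = Gd n b j u := by
  apply pd_eq ((diff_sphX b).differentiableAt)
  rw [hasDerivAt_pi]
  intro i
  induction i using Fin.cases with
  | zero =>
      have he : (fun t => sphX n b (Function.update u j t) 0)
          = fun t => (b 0 * ∏ l ∈ (Sset n 0).erase j, Complex.cos (u l)) * Complex.cos t := by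
        funext t
        simp only [sphX, Fin.cons_zero, Cprod_eq]
        rw [prod_update_factor (mem_Sset.mpr (Nat.zero_le _)) u t]
        ring
      rw [he]
      have hd := (Complex.hasDerivAt_cos (u j)).const_mul
        (b 0 * ∏ l ∈ (Sset n 0).erase j, Complex.cos (u l))
      convert hd using 1
      · rfl
      simp only [Gd, Fin.cons_zero]
      ring
  | succ m =>
      rcases lt_trichotomy m.val j.val with h1 | h1 | h1
      · have hmj : m ≠ j := Fin.ne_of_val_ne (Nat.ne_of_lt h1)
        have hjs : j ∈ Sset n (m.val+1) := mem_Sset.mpr h1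
        have he : (fun t => sphX n b (Function.update u j t) m.succ)
            = fun t => (b m.succ * (∏ l ∈ (Sset n (m.val+1)).erase j, Complex.cos (u l))
                * Complex.sin (u m)) * Complex.cos t := by
          funext t
          simp only [sphX, Fin.cons_succ, Cprod_eq]
          rw [prod_update_factor hjs u t, Function.update_of_ne hmj]
          ring
        rw [he]
        have hd := (Complex.hasDerivAt_cos (u j)).const_mul
          (b m.succ * (∏ l ∈ (Sset n (m.val+1)).erase j, Complex.cos (u l))
            * Complex.sin (u m))
        convert hd using 1
        · rfl
        simp only [Gd, Fin.cons_succ, if_pos h1]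
        ring
      · have hmj : m = j := Fin.ext h1
        subst hmj
        have hns : m ∉ Sset n (m.val+1) := by simp [mem_Sset]
        have he : (fun t => sphX n b (Function.update u m t) m.succ)
            = fun t => (b m.succ * Cprod n (m.val+1) u) * Complex.sin t := by
          funext t
          simp only [sphX, Fin.cons_succ, Cprod_eq]
          rw [prod_cos_update_of_not_mem hns, Function.update_self]
        rw [he]
        have hd := (Complex.hasDerivAt_sin (u m)).const_mul (b m.succ * Cprod n (m.val+1) u)
        convert hd using 1
        · rfl
        simp only [Gd, Fin.cons_succ, if_neg (lt_irrefl m.val), if_pos rfl, eq_self_iff_true, if_true]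
      · have hmj : m ≠ j := by
          intro h; rw [h] at h1; exact lt_irrefl _ h1
        have hns : j ∉ Sset n (m.val+1) := by simp [mem_Sset]; omega
        have he : (fun t => sphX n b (Function.update u j t) m.succ)
            = fun _ => b m.succ * Cprod n (m.val+1) u * Complex.sin (u m) := by
          funext t
          simp only [sphX, Fin.cons_succ, Cprod_eq]
          rw [prod_cos_update_of_not_mem hns, Function.update_of_ne hmj]
        rw [he]
        have hd := hasDerivAt_const (u j) (b m.succ * Cprod n (m.val+1) u * Complex.sin (u m))
        convert hd using 1
        simp only [Gd, Fin.cons_succ, if_neg (by omega : ¬ m.val < j.val), if_neg hmj]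

lemma pd_Gd {n : ℕ} (b : Fin (n+1) → ℂ) (j k : Fin n) (hkj : k < j) (u : Fin n → ℂ)
    (hc : Complex.cos (u j) ≠ 0) :
    pd k (Gd n b j) u = (-Complex.tan (u j)) • Gd n b k u := by
  have hkj' : (k : ℕ) < (j : ℕ) := hkj
  have hkjne : k ≠ j := ne_of_lt hkj
  have hjkne : j ≠ k := hkjne.symm
  apply pd_eq ((diff_Gd b j).differentiableAt)
  rw [hasDerivAt_pi]
  intro i
  induction i using Fin.cases with
  | zero =>
      have hk' : k ∈ (Sset n 0).erase j :=
        Finset.mem_erase.mpr ⟨hkjne, mem_Sset.mpr (Nat.zero_le _)⟩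
      have he : (fun t => Gd n b j (Function.update u k t) 0)
          = fun t => (-(b 0 * Complex.sin (u j)
              * ∏ l ∈ ((Sset n 0).erase j).erase k, Complex.cos (u l))) * Complex.cos t := by
        funext t
        simp only [Gd, Fin.cons_zero]
        rw [prod_update_factor hk' u t, Function.update_of_ne hjkne]
        ring
      rw [he]
      have hd := (Complex.hasDerivAt_cos (u k)).const_mul
        (-(b 0 * Complex.sin (u j)
          * ∏ l ∈ ((Sset n 0).erase j).erase k, Complex.cos (u l)))
      convert hd using 1
      · rfl
      have hj' : j ∈ (Sset n 0).erase k :=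
        Finset.mem_erase.mpr ⟨hjkne, mem_Sset.mpr (Nat.zero_le _)⟩
      simp only [Pi.smul_apply, Gd, Fin.cons_zero, smul_eq_mul]
      rw [prod_factor hj' u, Finset.erase_right_comm, Complex.tan_eq_sin_div_cos]
      field_simp
  | succ m =>
      by_cases h1 : m.val < j.val
      · rcases lt_trichotomy m.val k.val with h2 | h2 | h2
        · -- m < k < j : factor cos (u k)
          have hmk : m ≠ k := Fin.ne_of_val_ne (Nat.ne_of_lt h2)
          have hk' : k ∈ (Sset n (m.val+1)).erase j :=
            Finset.mem_erase.mpr ⟨hkjne, mem_Sset.mpr h2⟩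
          have he : (fun t => Gd n b j (Function.update u k t) m.succ)
              = fun t => (-(b m.succ * Complex.sin (u j)
                  * (∏ l ∈ ((Sset n (m.val+1)).erase j).erase k, Complex.cos (u l))
                  * Complex.sin (u m))) * Complex.cos t := by
            funext t
            simp only [Gd, Fin.cons_succ, if_pos h1]
            rw [prod_update_factor hk' u t, Function.update_of_ne hjkne,
              Function.update_of_ne hmk]
            ring
          rw [he]
          have hd := (Complex.hasDerivAt_cos (u k)).const_mul
            (-(b m.succ * Complex.sin (u j)
              * (∏ l ∈ ((Sset n (m.val+1)).erase j).erase k, Complex.cos (u l))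
              * Complex.sin (u m)))
          convert hd using 1
          · rfl
          have hj' : j ∈ (Sset n (m.val+1)).erase k :=
            Finset.mem_erase.mpr ⟨hjkne, mem_Sset.mpr h1⟩
          simp only [Pi.smul_apply, Gd, Fin.cons_succ, if_pos h2, smul_eq_mul]
          rw [prod_factor hj' u, Finset.erase_right_comm, Complex.tan_eq_sin_div_cos]
          field_simp
        · -- m = k : the sin (u m) factor differentiates
          have hmk : m = k := Fin.ext h2
          subst hmk
          have hns : m ∉ (Sset n (m.val+1)).erase j := by
            intro h
            have := (Finset.mem_erase.mp h).2
            rw [mem_Sset] at this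
            omega
          have he : (fun t => Gd n b j (Function.update u m t) m.succ)
              = fun t => (-(b m.succ * Complex.sin (u j)
                  * (∏ l ∈ (Sset n (m.val+1)).erase j, Complex.cos (u l)))) * Complex.sin t := by
            funext t
            simp only [Gd, Fin.cons_succ, if_pos h1]
            rw [prod_cos_update_of_not_mem hns, Function.update_of_ne hjkne,
              Function.update_self]
            ring
          rw [he]
          have hd := (Complex.hasDerivAt_sin (u m)).const_mul
            (-(b m.succ * Complex.sin (u j)
              * (∏ l ∈ (Sset n (m.val+1)).erase j, Complex.cos (u l))))
          convert hd using 1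
          · rfl
          simp only [Pi.smul_apply, Gd, Fin.cons_succ, if_neg (lt_irrefl m.val),
            if_pos rfl, if_true, smul_eq_mul, Cprod_eq]
          rw [prod_factor (mem_Sset.mpr hkj' : j ∈ Sset n (m.val+1)) u,
            Complex.tan_eq_sin_div_cos]
          field_simp
        · -- k < m < j : independent of u k
          have hmk : m ≠ k := Fin.ne_of_val_ne (by omega)
          have hns : k ∉ (Sset n (m.val+1)).erase j := by
            intro h
            have := (Finset.mem_erase.mp h).2
            rw [mem_Sset] at this
            omega
          have he : (fun t => Gd n b j (Function.update u k t) m.succ)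
              = fun _ => -(b m.succ * Complex.sin (u j)
                  * (∏ l ∈ (Sset n (m.val+1)).erase j, Complex.cos (u l))
                  * Complex.sin (u m)) := by
            funext t
            simp only [Gd, Fin.cons_succ, if_pos h1]
            rw [prod_cos_update_of_not_mem hns, Function.update_of_ne hjkne,
              Function.update_of_ne hmk]
          rw [he]
          have hd := hasDerivAt_const (u k)
            (-(b m.succ * Complex.sin (u j)
              * (∏ l ∈ (Sset n (m.val+1)).erase j, Complex.cos (u l)) * Complex.sin (u m)))
          convert hd using 1
          simp only [Pi.smul_apply, Gd, Fin.cons_succ,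
            if_neg (by omega : ¬ m.val < k.val), if_neg hmk, smul_eq_mul, mul_zero]
      · by_cases h2 : m = j
        · -- m = j : component independent of u k
          subst h2
          have hns : k ∉ Sset n (m.val+1) := by
            rw [mem_Sset]; omega
          have he : (fun t => Gd n b m (Function.update u k t) m.succ)
              = fun _ => b m.succ * Cprod n (m.val+1) u * Complex.cos (u m) := by
            funext t
            simp only [Gd, Fin.cons_succ, if_neg (lt_irrefl m.val), if_pos rfl, eq_self_iff_true, if_true, Cprod_eq]
            rw [prod_cos_update_of_not_mem hns, Function.update_of_ne hjkne]
          rw [he]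
          have hd := hasDerivAt_const (u k)
            (b m.succ * Cprod n (m.val+1) u * Complex.cos (u m))
          convert hd using 1
          simp only [Pi.smul_apply, Gd, Fin.cons_succ,
            if_neg (by omega : ¬ m.val < k.val), if_neg hkjne.symm, smul_eq_mul, mul_zero]
        · -- j < m : component is 0
          have hmk : m ≠ k := Fin.ne_of_val_ne (by
            have : (j : ℕ) ≤ (m : ℕ) := by omega
            omega)
          have he : (fun t => Gd n b j (Function.update u k t) m.succ)
              = fun _ => (0 : ℂ) := by
            funext t
            simp only [Gd, Fin.cons_succ, if_neg h1, if_neg h2]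
          rw [he]
          have hd := hasDerivAt_const (u k) (0 : ℂ)
          convert hd using 1
          simp only [Pi.smul_apply, Gd, Fin.cons_succ,
            if_neg (by omega : ¬ m.val < k.val), if_neg hmk, smul_eq_mul, mul_zero]

/-- `(u¹,…,uⁿ)` is a conjugate system on the quadric:
`∂ₖ∂ⱼX(u) = −tan(uʲ)·∂ₖX(u)` for `k < j` wherever `cos(uʲ) ≠ 0`. -/
theorem stmt4 (n : ℕ) (hn : 2 ≤ n) (a b : Fin (n+1) → ℂ)
    (ha : ∀ j, a j ≠ 0) (hb : ∀ j, (b j)^2 = a j) :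
    ∀ j k : Fin n, k < j → ∀ u : Fin n → ℂ, Complex.cos (u j) ≠ 0 →
      pd k (pd j (sphX n b)) u = (-Complex.tan (u j)) • pd k (sphX n b) u := by
  intro j k hkj u hc
  have h1 : pd j (sphX n b) = Gd n b j := funext fun v => pd_sphX b j v
  rw [h1, pd_sphX b k u]
  exact pd_Gd b j k hkj u hc
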